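/- Fix constants ρ̄ > 0, θ̄ > 0, p̄_ρ > 0, k̄ > 0, ν̄ > 0, λ̄ ∈ ℝ with 2ν̄ + λ̄ > 0, ᾱ > 0, ē_θ > 0, p̄_θ ∈ ℝ, and ū ∈ ℝ³. For ξ ∈ ℝ³ with ξ ≠ 0, set ω = ξ/|ξ|, β(ξ) = p̄_ρ + k̄ρ̄|ξ|², γ = √θ̄ p̄_θ/(√ē_θ ρ̄), and define the 5×5 real block matrices A_S(ξ) = [[ū·ω, √β(ξ) ωᵀ, 0], [√β(ξ) ω, (ū·ω) I₃, γ ω], [0, γ ωᵀ, ū·ω]] and B̄_S(ξ) = (1/ρ̄)[[0, 0, 0], [0, ν̄ I₃ + (ν̄+λ̄) ω⊗ω, 0], [0, 0, ᾱ/ē_θ]]. Then for every ξ ≠ 0: B̄_S(ξ) is positive semidefinite, its kernel equals span{(1,0,0,0,0)}, and the pair (A_S(ξ), B̄_S(ξ)) is genuinely coupled, i.e., for every μ ∈ ℝ and every ψ ∈ ℝ⁵ with ψ ≠ 0 and B̄_S(ξ)ψ = 0, one has (μI + A_S(ξ))ψ ≠ 0. -/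

import Mathlib

open Matrix

/-- Genuine coupling of a pair of real matrices `(A, B)`: no eigenvector of `A`
lies in the kernel of `B`. -/
def GenuinelyCoupled {n : ℕ} (A B : Matrix (Fin n) (Fin n) ℝ) : Prop :=
  ∀ (μ : ℝ) (ψ : Fin n → ℝ), ψ ≠ 0 → B *ᵥ ψ = 0 →
    (μ • (1 : Matrix (Fin n) (Fin n) ℝ) + A) *ᵥ ψ ≠ 0

set_option maxHeartbeats 2000000 in
theorem NSFK_aux (ρ ν lam α eθ w0 w1 w2 s γ uω : ℝ)
    (hρ : 0 < ρ) (hν : 0 < ν) (hlam : 0 < 2 * ν + lam) (hα : 0 < α) (he : 0 < eθ)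
    (hw : w0 ^ 2 + w1 ^ 2 + w2 ^ 2 = 1) (hs : 0 < s) :
    (((1 / ρ) • !![0, 0, 0, 0, 0;
        0, ν + (ν + lam) * w0 ^ 2, (ν + lam) * w0 * w1, (ν + lam) * w0 * w2, 0;
        0, (ν + lam) * w1 * w0, ν + (ν + lam) * w1 ^ 2, (ν + lam) * w1 * w2, 0;
        0, (ν + lam) * w2 * w0, (ν + lam) * w2 * w1, ν + (ν + lam) * w2 ^ 2, 0;
        0, 0, 0, 0, α / eθ] : Matrix (Fin 5) (Fin 5) ℝ).PosSemidef) ∧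
    (∀ ψ : Fin 5 → ℝ, ((1 / ρ) • !![0, 0, 0, 0, 0;
        0, ν + (ν + lam) * w0 ^ 2, (ν + lam) * w0 * w1, (ν + lam) * w0 * w2, 0;
        0, (ν + lam) * w1 * w0, ν + (ν + lam) * w1 ^ 2, (ν + lam) * w1 * w2, 0;
        0, (ν + lam) * w2 * w0, (ν + lam) * w2 * w1, ν + (ν + lam) * w2 ^ 2, 0;
        0, 0, 0, 0, α / eθ] : Matrix (Fin 5) (Fin 5) ℝ) *ᵥ ψ = 0 ↔
        ∃ t : ℝ, ψ = t • ![1, 0, 0, 0, 0]) ∧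
    GenuinelyCoupled (!![uω, s * w0, s * w1, s * w2, 0;
         s * w0, uω, 0, 0, γ * w0;
         s * w1, 0, uω, 0, γ * w1;
         s * w2, 0, 0, uω, γ * w2;
         0, γ * w0, γ * w1, γ * w2, uω])
      ((1 / ρ) • !![0, 0, 0, 0, 0;
        0, ν + (ν + lam) * w0 ^ 2, (ν + lam) * w0 * w1, (ν + lam) * w0 * w2, 0;
        0, (ν + lam) * w1 * w0, ν + (ν + lam) * w1 ^ 2, (ν + lam) * w1 * w2, 0;
        0, (ν + lam) * w2 * w0, (ν + lam) * w2 * w1, ν + (ν + lam) * w2 ^ 2, 0;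
        0, 0, 0, 0, α / eθ]) := by
  have hρ' : (1:ℝ)/ρ ≠ 0 := by positivity
  -- kernel characterization first
  have hker : ∀ ψ : Fin 5 → ℝ, ((1 / ρ) • !![0, 0, 0, 0, 0;
        0, ν + (ν + lam) * w0 ^ 2, (ν + lam) * w0 * w1, (ν + lam) * w0 * w2, 0;
        0, (ν + lam) * w1 * w0, ν + (ν + lam) * w1 ^ 2, (ν + lam) * w1 * w2, 0;
        0, (ν + lam) * w2 * w0, (ν + lam) * w2 * w1, ν + (ν + lam) * w2 ^ 2, 0;
        0, 0, 0, 0, α / eθ] : Matrix (Fin 5) (Fin 5) ℝ) *ᵥ ψ = 0 ↔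
        ∃ t : ℝ, ψ = t • ![1, 0, 0, 0, 0] := by
    intro ψ
    constructor
    · intro h
      have h1 := congrFun h 1
      have h2 := congrFun h 2
      have h3 := congrFun h 3
      have h4 := congrFun h 4
      simp [Matrix.mulVec, dotProduct, Fin.sum_univ_five] at h1 h2 h3 h4
      have hψ4 : ψ 4 = 0 := by
        rcases h4 with (h|h|h) | h
        · exact absurd h hρ.ne'
        · exact absurd h hα.ne'
        · exact absurd h he.ne'
        · exact h
      have hρ0 : ρ ≠ 0 := hρ.ne'
      field_simp at h1 h2 h3
      have hd : (2 * ν + lam) * (w0 * ψ 1 + w1 * ψ 2 + w2 * ψ 3) = 0 := by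
        linear_combination w0 * h1 + w1 * h2 + w2 * h3 -
          ((ν + lam) * (w0 * ψ 1 + w1 * ψ 2 + w2 * ψ 3)) * hw
      have hd0 : w0 * ψ 1 + w1 * ψ 2 + w2 * ψ 3 = 0 :=
        by rcases mul_eq_zero.mp hd with h | h
           · exact absurd h hlam.ne'
           · exact h
      have hψ1 : ψ 1 = 0 := by
        have : ν * ψ 1 = 0 := by linear_combination h1 - (ν + lam) * w0 * hd0
        rcases mul_eq_zero.mp this with h | h
        · exact absurd h hν.ne'
        · exact h
      have hψ2 : ψ 2 = 0 := by
        have : ν * ψ 2 = 0 := by linear_combination h2 - (ν + lam) * w1 * hd0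
        rcases mul_eq_zero.mp this with h | h
        · exact absurd h hν.ne'
        · exact h
      have hψ3 : ψ 3 = 0 := by
        have : ν * ψ 3 = 0 := by linear_combination h3 - (ν + lam) * w2 * hd0
        rcases mul_eq_zero.mp this with h | h
        · exact absurd h hν.ne'
        · exact h
      refine ⟨ψ 0, funext fun i => ?_⟩
      fin_cases i <;> simp [hψ1, hψ2, hψ3, hψ4]
    · rintro ⟨t, rfl⟩
      funext i
      fin_cases i <;> simp [Matrix.mulVec, dotProduct, Fin.sum_univ_five]
  refine ⟨Matrix.posSemidef_iff_dotProduct_mulVec.mpr ⟨?_, ?_⟩, hker, ?_⟩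
  · -- Hermitian
    ext i j
    fin_cases i <;> fin_cases j <;>
      simp [Matrix.conjTranspose_apply, Matrix.vecHead, Matrix.vecTail] <;>
        first | tauto | (left; ring) | ring
  · -- nonneg quadratic form
    intro x
    have ha : 0 < α / eθ := div_pos hα he
    have hr : 0 < ρ⁻¹ := inv_pos.mpr hρ
    simp only [star_trivial]
    simp [dotProduct, Matrix.mulVec, Fin.sum_univ_five]
    nlinarith [mul_nonneg (mul_nonneg hr.le hν.le) (sq_nonneg (w0 * x 2 - w1 * x 1)),
      mul_nonneg (mul_nonneg hr.le hν.le) (sq_nonneg (w0 * x 3 - w2 * x 1)),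
      mul_nonneg (mul_nonneg hr.le hν.le) (sq_nonneg (w1 * x 3 - w2 * x 2)),
      mul_nonneg (mul_nonneg hr.le hlam.le) (sq_nonneg (w0 * x 1 + w1 * x 2 + w2 * x 3)),
      mul_nonneg (mul_nonneg hr.le ha.le) (sq_nonneg (x 4)),
      mul_nonneg (mul_nonneg hr.le hν.le)
        (add_nonneg (add_nonneg (sq_nonneg (x 1)) (sq_nonneg (x 2))) (sq_nonneg (x 3))), hw]
  · -- genuinely coupled
    intro μ ψ hne hB hcontra
    obtain ⟨t, rfl⟩ := (hker ψ).mp hB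
    have ht : t ≠ 0 := by
      rintro rfl
      simp at hne
    have c1 := congrFun hcontra 1
    have c2 := congrFun hcontra 2
    have c3 := congrFun hcontra 3
    simp [Matrix.mulVec, dotProduct, Fin.sum_univ_five, Matrix.one_apply] at c1 c2 c3
    have hw0 : w0 = 0 := by
      rcases c1 with (h | h) | h
      exacts [absurd h hs.ne', h, absurd h ht]
    have hw1 : w1 = 0 := by
      rcases c2 with (h | h) | h
      exacts [absurd h hs.ne', h, absurd h ht]
    have hw2 : w2 = 0 := by
      rcases c3 with (h | h) | h
      exacts [absurd h hs.ne', h, absurd h ht]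
    rw [hw0, hw1, hw2] at hw
    norm_num at hw

/-- For the symmetrized symbols of the linearized three-dimensional
Navier–Stokes–Fourier–Korteweg system, the generalized viscosity symbol `B̄_S(ξ)` is
positive semidefinite with kernel `span{(1,0,0,0,0)}`, and the pair `(A_S(ξ), B̄_S(ξ))`
is genuinely coupled, for every `ξ ≠ 0`. -/
theorem NSFK_genuinely_coupled (ρ θ₀ pρ k ν lam α eθ pθ : ℝ) (u : Fin 3 → ℝ)
    (hρ : 0 < ρ) (hθ₀ : 0 < θ₀) (hp : 0 < pρ) (hk : 0 < k) (hν : 0 < ν)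
    (hlam : 0 < 2 * ν + lam) (hα : 0 < α) (he : 0 < eθ)
    (ξ : Fin 3 → ℝ) (hξ : ξ ≠ 0) :
    let nξ := Real.sqrt (ξ 0 ^ 2 + ξ 1 ^ 2 + ξ 2 ^ 2)
    let ω : Fin 3 → ℝ := fun i => ξ i / nξ
    let β := pρ + k * ρ * (ξ 0 ^ 2 + ξ 1 ^ 2 + ξ 2 ^ 2)
    let sβ := Real.sqrt β
    let γ := Real.sqrt θ₀ * pθ / (Real.sqrt eθ * ρ)
    let uω := u 0 * ω 0 + u 1 * ω 1 + u 2 * ω 2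
    let AS : Matrix (Fin 5) (Fin 5) ℝ :=
      !![uω, sβ * ω 0, sβ * ω 1, sβ * ω 2, 0;
         sβ * ω 0, uω, 0, 0, γ * ω 0;
         sβ * ω 1, 0, uω, 0, γ * ω 1;
         sβ * ω 2, 0, 0, uω, γ * ω 2;
         0, γ * ω 0, γ * ω 1, γ * ω 2, uω]
    let BS : Matrix (Fin 5) (Fin 5) ℝ :=
      (1 / ρ) •
        !![0, 0, 0, 0, 0;
           0, ν + (ν + lam) * ω 0 ^ 2, (ν + lam) * ω 0 * ω 1, (ν + lam) * ω 0 * ω 2, 0;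
           0, (ν + lam) * ω 1 * ω 0, ν + (ν + lam) * ω 1 ^ 2, (ν + lam) * ω 1 * ω 2, 0;
           0, (ν + lam) * ω 2 * ω 0, (ν + lam) * ω 2 * ω 1, ν + (ν + lam) * ω 2 ^ 2, 0;
           0, 0, 0, 0, α / eθ]
    BS.PosSemidef ∧
    (∀ ψ : Fin 5 → ℝ, BS *ᵥ ψ = 0 ↔ ∃ t : ℝ, ψ = t • ![1, 0, 0, 0, 0]) ∧
    GenuinelyCoupled AS BS := by
  intro nξ ω β sβ γ uω AS BS
  have hsum : 0 < ξ 0 ^ 2 + ξ 1 ^ 2 + ξ 2 ^ 2 := by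
    have hex : ∃ i, ξ i ≠ 0 := by
      by_contra h
      push_neg at h
      exact hξ (funext h)
    obtain ⟨i, hi⟩ := hex
    fin_cases i <;> positivity
  have hnpos : 0 < nξ := Real.sqrt_pos.mpr hsum
  have hn : nξ ^ 2 = ξ 0 ^ 2 + ξ 1 ^ 2 + ξ 2 ^ 2 := Real.sq_sqrt hsum.le
  have hw : ω 0 ^ 2 + ω 1 ^ 2 + ω 2 ^ 2 = 1 := by
    show (ξ 0 / nξ) ^ 2 + (ξ 1 / nξ) ^ 2 + (ξ 2 / nξ) ^ 2 = 1
    field_simp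
    linarith [hn]
  have hβ : 0 < β := by
    show 0 < pρ + k * ρ * (ξ 0 ^ 2 + ξ 1 ^ 2 + ξ 2 ^ 2)
    positivity
  have hsβ : 0 < sβ := Real.sqrt_pos.mpr hβ
  exact NSFK_aux ρ ν lam α eθ (ω 0) (ω 1) (ω 2) sβ γ uω hρ hν hlam hα he hw hsβ
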